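/- Let τ be a tracial state on A, let a, b ∈ A with 0 ≤ a ≤ 1 and 0 ≤ b ≤ 1, and let ε ∈ (0, 1/2). If τ(a) > 1 − ε, then τ(b·a·b) > τ(b²) − √ε. -/

import Mathlib

open scoped ComplexOrder

/-- Lemma 4.1 of the paper (Lemma `Lortho`): if `τ` is a tracial state on a unital
C*-algebra `A`, `0 ≤ a ≤ 1`, `0 ≤ b ≤ 1`, `ε ∈ (0, 1/2)` and `τ(a) > 1 - ε`, then
`τ(b·a·b) > τ(b²) - √ε`. -/
theorem stmt10 {A : Type*} [CStarAlgebra A] [PartialOrder A] [StarOrderedRing A]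
    (τ : A →ₗ[ℂ] ℂ)
    (hτ1 : τ 1 = 1)
    (hτpos : ∀ x : A, 0 ≤ τ (star x * x))
    (hτtr : ∀ x y : A, τ (x * y) = τ (y * x))
    (a b : A) (ha0 : 0 ≤ a) (ha1 : a ≤ 1) (hb0 : 0 ≤ b) (hb1 : b ≤ 1)
    (ε : ℝ) (hε0 : 0 < ε) (hε1 : ε < 1 / 2)
    (hτa : 1 - (ε : ℂ) < τ a) :
    τ (b * b) - (Real.sqrt ε : ℂ) < τ (b * a * b) := by
  have hpos : ∀ e : A, 0 ≤ e → 0 ≤ τ e := by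
    intro e he
    have h1 : CFC.sqrt e * CFC.sqrt e = e := CFC.sqrt_mul_sqrt_self e he
    have h2 : star (CFC.sqrt e) = CFC.sqrt e :=
      (IsSelfAdjoint.of_nonneg (CFC.sqrt_nonneg e)).star_eq
    have := hτpos (CFC.sqrt e)
    rwa [h2, h1] at this
  have hmono : ∀ c d : A, c ≤ d → τ c ≤ τ d := by
    intro c d hcd
    have := hpos (d - c) (sub_nonneg.mpr hcd)
    rw [map_sub] at this
    exact sub_nonneg.mp this
  set u : A := 1 - a with hu
  set v : A := b * b with hv
  have hu0 : 0 ≤ u := sub_nonneg.mpr ha1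
  have hu1 : u ≤ 1 := by simpa [hu] using ha0
  have hsu : star u = u := (IsSelfAdjoint.of_nonneg hu0).star_eq
  have hsb : star b = b := (IsSelfAdjoint.of_nonneg hb0).star_eq
  have hsv : star v = v := by rw [hv, star_mul, hsb]
  have hv0 : 0 ≤ v := by simpa [hsb] using star_mul_self_nonneg b
  have hv1 : v ≤ 1 := by
    have := CStarAlgebra.pow_antitone hb0 hb1 (by norm_num : (0:ℕ) ≤ 2)
    simpa [pow_succ, pow_zero] using this
  have hQtr : τ (u * v) = τ (b * u * b) := by
    rw [hv, ← mul_assoc, hτtr (u * b) b, mul_assoc b u b]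
  have hQ0 : 0 ≤ τ (u * v) := by
    rw [hQtr]
    exact hpos _ (by simpa [hsb] using star_left_conjugate_nonneg hu0 b)
  -- the three quantities
  have hP0 : 0 ≤ τ (u * u) := by
    have := hτpos u; rwa [hsu] at this
  have hR0 : 0 ≤ τ (v * v) := by
    have := hτpos v; rwa [hsv] at this
  set p : ℝ := (τ (u * u)).re with hp
  set q : ℝ := (τ (u * v)).re with hq
  set r : ℝ := (τ (v * v)).re with hr
  have hp0 : 0 ≤ p := (Complex.nonneg_iff.mp hP0).1
  have hq0 : 0 ≤ q := (Complex.nonneg_iff.mp hQ0).1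
  have hr0 : 0 ≤ r := (Complex.nonneg_iff.mp hR0).1
  have hPre : τ (u * u) = (p : ℂ) :=
    Complex.ext (by simp [hp]) (by simp [← (Complex.nonneg_iff.mp hP0).2])
  have hQre : τ (u * v) = (q : ℂ) :=
    Complex.ext (by simp [hq]) (by simp [← (Complex.nonneg_iff.mp hQ0).2])
  have hRre : τ (v * v) = (r : ℂ) :=
    Complex.ext (by simp [hr]) (by simp [← (Complex.nonneg_iff.mp hR0).2])
  -- Cauchy–Schwarz via the quadratic in t
  have hquad : ∀ t : ℝ, 0 ≤ r * (t * t) + (-2 * q) * t + p := by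
    intro t
    have hkey := hτpos (u - (t : ℂ) • v)
    have hstar : star (u - (t : ℂ) • v) = u - (t : ℂ) • v := by
      rw [star_sub, star_smul, hsu, hsv, Complex.star_def, Complex.conj_ofReal]
    rw [hstar] at hkey
    have hexp : (u - (t:ℂ) • v) * (u - (t:ℂ) • v)
        = u * u - (t:ℂ) • (u * v) - (t:ℂ) • (v * u) + ((t:ℂ) * (t:ℂ)) • (v * v) := by
      simp only [sub_mul, mul_sub, smul_mul_assoc, mul_smul_comm, smul_smul]
      module
    rw [hexp] at hkey
    simp only [map_add, map_sub, map_smul, smul_eq_mul, hτtr v u,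
        hPre, hQre, hRre] at hkey
    have hkey' : (0:ℂ) ≤ ((r * (t * t) + (-2 * q) * t + p : ℝ) : ℂ) := by
      refine le_of_le_of_eq hkey ?_
      push_cast; ring
    exact_mod_cast hkey'
  have hdisc := discrim_le_zero hquad
  rw [discrim] at hdisc
  have hq2 : q * q ≤ r * p := by nlinarith
  -- p < ε
  have hτu : τ u = 1 - τ a := by rw [hu, map_sub, hτ1]
  have haim : (τ a).im = 0 := by
    have := (Complex.lt_def.mp hτa).2
    simpa using this.symm
  have hare : 1 - ε < (τ a).re := by
    have := (Complex.lt_def.mp hτa).1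
    simpa using this
  have hpe : p < ε := by
    have h1 : u * u ≤ u := by
      have := CStarAlgebra.pow_antitone hu0 hu1 (by norm_num : (1:ℕ) ≤ 2)
      simpa [pow_succ, pow_one] using this
    have h2 := hmono _ _ h1
    rw [hPre, hτu] at h2
    have := (Complex.le_def.mp h2).1
    simp [haim] at this
    linarith
  -- r ≤ 1
  have hre1 : r ≤ 1 := by
    have h1 : v * v ≤ 1 := by
      have := CStarAlgebra.pow_antitone hv0 hv1 (by norm_num : (0:ℕ) ≤ 2)
      simpa [pow_succ, pow_zero] using this
    have h2 := hmono _ _ h1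
    rw [hRre, hτ1] at h2
    exact_mod_cast (Complex.le_def.mp h2).1
  have hqlt : q < Real.sqrt ε := by
    have hq2' : q ^ 2 < ε := by nlinarith
    exact (Real.lt_sqrt hq0).mpr hq2'
  -- conclude
  have hbab : τ (b * a * b) = τ (b * b) - τ (u * v) := by
    have h1 : τ (u * v) = τ (b * b) - τ (b * a * b) := by
      rw [hQtr, hu]
      have : b * (1 - a) * b = b * b - b * a * b := by noncomm_ring
      rw [this, map_sub]
    rw [h1]; ring
  rw [hbab, hQre]
  rw [Complex.lt_def]
  constructor
  · simp only [Complex.sub_re, Complex.ofReal_re]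
    linarith
  · simp [hv]
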